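/- Let X be a Hausdorff topological space and let G be a Hausdorff topological group acting continuously on X by homeomorphisms. Let T, S ∈ G with TS = ST, and suppose the closure in G of the cyclic group generated by S is compact. Then T acts distally on X if and only if TS acts distally on X. -/

import Mathlib

/-- A family `S` of self-maps of a topological space `X` acts distally if for every pair of
distinct points `x, y`, the closure of `{(f x, f y) : f ∈ S}` in `X × X` does not meet the
diagonal. -/
def ActsDistally {X : Type*} [TopologicalSpace X] (S : Set (X → X)) : Prop :=
  ∀ x y : X, x ≠ y → ∀ d : X, (d, d) ∉ closure ((fun f => (f x, f y)) '' S)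

open Filter Topology

lemma aux_distal {G X : Type*} [Group G] [TopologicalSpace G] [IsTopologicalGroup G] [T2Space G]
    [TopologicalSpace X] [T2Space X] [MulAction G X] [ContinuousSMul G X]
    (T S : G) (hcomm : T * S = S * T)
    (hS : IsCompact (closure {g : G | ∃ k : ℤ, g = S ^ k}))
    (hT : ActsDistally {f : X → X | ∃ k : ℤ, f = fun x => (T ^ k) • x}) :
    ActsDistally {f : X → X | ∃ k : ℤ, f = fun x => ((T * S) ^ k) • x} := by
  have hc : Commute T S := hcomm
  intro x y hxy d hd
  -- the orbit set is the range of φ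
  have himg : (fun f : X → X => (f x, f y)) '' {f : X → X | ∃ k : ℤ, f = fun x => ((T * S) ^ k) • x}
      = Set.range (fun k : ℤ => (((T * S) ^ k) • x, ((T * S) ^ k) • y)) := by
    ext p
    constructor
    · rintro ⟨f, ⟨k, rfl⟩, rfl⟩; exact ⟨k, rfl⟩
    · rintro ⟨k, rfl⟩; exact ⟨_, ⟨k, rfl⟩, rfl⟩
  rw [himg] at hd
  rcases mem_closure_iff_ultrafilter.mp hd with ⟨U, hrange, hle⟩
  have hne : (Filter.comap (fun k : ℤ => (((T * S) ^ k) • x, ((T * S) ^ k) • y)) (U : Filter (X × X))).NeBot :=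
    Filter.NeBot.comap_of_range_mem U.neBot hrange
  set 𝒰 : Ultrafilter ℤ := @Ultrafilter.of ℤ _ hne with h𝒰
  have h𝒰le : (𝒰 : Filter ℤ) ≤ Filter.comap (fun k : ℤ => (((T * S) ^ k) • x, ((T * S) ^ k) • y)) (U : Filter (X × X)) :=
    Ultrafilter.of_le _
  have hφ : Tendsto (fun k : ℤ => (((T * S) ^ k) • x, ((T * S) ^ k) • y)) 𝒰 (𝓝 (d, d)) := by
    refine le_trans ?_ hle
    calc Filter.map _ (𝒰 : Filter ℤ) ≤ Filter.map _ (Filter.comap _ (U : Filter (X × X))) :=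
          Filter.map_mono h𝒰le
      _ ≤ (U : Filter (X × X)) := Filter.map_comap_le
  have hx1 : Tendsto (fun k : ℤ => ((T * S) ^ k) • x) 𝒰 (𝓝 d) :=
    (continuous_fst.tendsto _).comp hφ
  have hy1 : Tendsto (fun k : ℤ => ((T * S) ^ k) • y) 𝒰 (𝓝 d) :=
    (continuous_snd.tendsto _).comp hφ
  -- S^k converges along 𝒰 to some s in the compact closure
  have hmem : ↑(𝒰.map (fun k : ℤ => S ^ k)) ≤ 𝓟 (closure {g : G | ∃ k : ℤ, g = S ^ k}) := by
    refine Filter.le_principal_iff.mpr ?_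
    refine Filter.mem_map.mpr (Filter.univ_mem' ?_)
    intro k
    exact subset_closure ⟨k, rfl⟩
  obtain ⟨s, -, hslim⟩ := hS.ultrafilter_le_nhds _ hmem
  have hSlim : Tendsto (fun k : ℤ => S ^ k) 𝒰 (𝓝 s) := hslim
  have hSinv : Tendsto (fun k : ℤ => (S ^ k)⁻¹) 𝒰 (𝓝 s⁻¹) := hSlim.inv
  -- key identity
  have hkey : ∀ (k : ℤ) (z : X), (S ^ k)⁻¹ • (((T * S) ^ k) • z) = (T ^ k) • z := by
    intro k z
    have : (T * S) ^ k = S ^ k * T ^ k := by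
      rw [hc.mul_zpow]
      exact (hc.zpow_zpow k k).eq
    rw [this, smul_smul, inv_mul_cancel_left]
  have hx2 : Tendsto (fun k : ℤ => (T ^ k) • x) 𝒰 (𝓝 (s⁻¹ • d)) := by
    have := hSinv.smul hx1
    simpa only [hkey] using this
  have hy2 : Tendsto (fun k : ℤ => (T ^ k) • y) 𝒰 (𝓝 (s⁻¹ • d)) := by
    have := hSinv.smul hy1
    simpa only [hkey] using this
  refine hT x y hxy (s⁻¹ • d) ?_
  refine mem_closure_of_tendsto (hx2.prodMk_nhds hy2) ?_
  filter_upwards with k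
  exact ⟨_, ⟨k, rfl⟩, rfl⟩

/-- If a Hausdorff topological group `G` acts continuously on a Hausdorff space `X`, `T, S ∈ G`
commute, and the closure of the cyclic group generated by `S` is compact in `G`, then `T` acts
distally on `X` iff `TS` acts distally on `X`. -/
theorem stmt3 {G X : Type*} [Group G] [TopologicalSpace G] [IsTopologicalGroup G] [T2Space G]
    [TopologicalSpace X] [T2Space X] [MulAction G X] [ContinuousSMul G X]
    (T S : G) (hcomm : T * S = S * T)
    (hS : IsCompact (closure {g : G | ∃ k : ℤ, g = S ^ k})) :
    ActsDistally {f : X → X | ∃ k : ℤ, f = fun x => (T ^ k) • x} ↔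
      ActsDistally {f : X → X | ∃ k : ℤ, f = fun x => ((T * S) ^ k) • x} := by
  have hsetinv : {g : G | ∃ k : ℤ, g = S⁻¹ ^ k} = {g : G | ∃ k : ℤ, g = S ^ k} := by
    ext g
    constructor
    · rintro ⟨k, rfl⟩; exact ⟨-k, by rw [zpow_neg, inv_zpow]⟩
    · rintro ⟨k, rfl⟩; exact ⟨-k, by rw [zpow_neg, inv_zpow, inv_inv]⟩
  constructor
  · exact aux_distal T S hcomm hS
  · intro hTS
    have hc' : (T * S) * S⁻¹ = S⁻¹ * (T * S) := by
      rw [mul_inv_cancel_right, hcomm, inv_mul_cancel_left]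
    have hS' : IsCompact (closure {g : G | ∃ k : ℤ, g = S⁻¹ ^ k}) := by
      rw [hsetinv]; exact hS
    have := aux_distal (T * S) S⁻¹ hc' hS' hTS
    simpa only [mul_inv_cancel_right] using this
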